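/- (Corollaire) For every derivation δ: A → M of A with values in a diagonal bimodule M there exists a unique bimodule homomorphism i_δ: Ω¹_Der(A) → M such that δ = i_δ ∘ d, where d: A → Ω¹_Der(A) is given by (da)(δ') = δ'(a). In other words, d: A → Ω¹_Der(A) is universal for derivations of A with values in diagonal bimodules. -/

import Mathlib

set_option maxHeartbeats 1000000
set_option synthInstance.maxHeartbeats 400000

open TensorProduct MulOpposite

universe uK uA uM

section Der
variable (K A : Type*) [CommRing K] [Ring A] [Algebra K A]

/-- `Der(A)`: the `K`-module of derivations of `A` into itself. -/
def derSub : Submodule K (A →ₗ[K] A) where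
  carrier := {f : A →ₗ[K] A | ∀ a b : A, f (a * b) = a * f b + f a * b}
  add_mem' := by
    intro f g hf hg a b
    simp only [LinearMap.add_apply, hf a b, hg a b, mul_add, add_mul]
    abel
  zero_mem' := by intro a b; simp
  smul_mem' := by
    intro k f hf a b
    simp only [LinearMap.smul_apply, hf a b, smul_add, Algebra.mul_smul_comm,
      Algebra.smul_mul_assoc]

/-- The map `d : A → C¹(Der(A), A)`, `(d a) δ = δ a`. -/
def dDer (a : A) : (derSub K A) →ₗ[K] A where
  toFun δ := (δ : A →ₗ[K] A) a
  map_add' δ ε := by simp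
  map_smul' k δ := by simp

/-- The bimodule structure on `C¹(Der(A), A)`, `(a • f • b) δ = a * f δ * b`. -/
noncomputable def bimoduleC1 : Module (A ⊗[K] Aᵐᵒᵖ) ((derSub K A) →ₗ[K] A) :=
  haveI h1 : SMulCommClass A Aᵐᵒᵖ ((derSub K A) →ₗ[K] A) :=
    ⟨fun a b f => LinearMap.ext fun x => smul_comm a b (f x)⟩
  haveI h2 : IsScalarTower K A ((derSub K A) →ₗ[K] A) :=
    ⟨fun k a f => LinearMap.ext fun x => smul_assoc k a (f x)⟩
  haveI h3 : IsScalarTower K Aᵐᵒᵖ ((derSub K A) →ₗ[K] A) :=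
    ⟨fun k b f => LinearMap.ext fun x => smul_assoc k b (f x)⟩
  TensorProduct.Algebra.module

attribute [local instance] bimoduleC1

/-- `Ω¹_Der(A)`: the sub-bimodule of `C¹(Der(A), A)` generated by `dA`. -/
noncomputable def omegaDer : Submodule (A ⊗[K] Aᵐᵒᵖ) ((derSub K A) →ₗ[K] A) :=
  Submodule.span _ (Set.range (dDer K A))

end Der


section Statement
variable (K : Type uK) (A : Type uA) [CommRing K] [Ring A] [Algebra K A]

attribute [local instance] bimoduleC1

/-- `A` as a bimodule over itself. -/
noncomputable def bimoduleBA : Module (A ⊗[K] Aᵐᵒᵖ) A := TensorProduct.Algebra.module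

attribute [local instance] bimoduleBA

lemma smulBA (a : A) (b : Aᵐᵒᵖ) (x : A) : (a ⊗ₜ[K] b) • x = a * (x * unop b) := rfl

lemma smulC1_eval (a : A) (b : Aᵐᵒᵖ) (ω : (derSub K A) →ₗ[K] A) (δ' : derSub K A) :
    ((a ⊗ₜ[K] b) • ω) δ' = (a ⊗ₜ[K] b) • (ω δ') := rfl

lemma eval_smul (t : A ⊗[K] Aᵐᵒᵖ) (ω : (derSub K A) →ₗ[K] A) (δ' : derSub K A) :
    (t • ω) δ' = t • (ω δ') := by
  induction t using TensorProduct.induction_on with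
  | zero =>
    show ((0 : A ⊗[K] Aᵐᵒᵖ) • ω) δ' = (0 : A ⊗[K] Aᵐᵒᵖ) • ω δ'
    exact (LinearMap.congr_fun (zero_smul (A ⊗[K] Aᵐᵒᵖ) ω) δ').trans (zero_smul (A ⊗[K] Aᵐᵒᵖ) (ω δ')).symm
  | tmul a b => exact smulC1_eval K A a b ω δ'
  | add x y hx hy => rw [add_smul, add_smul, LinearMap.add_apply, hx, hy]

lemma algebraMap_smulBA (k : K) (x : A) :
    (algebraMap K (A ⊗[K] Aᵐᵒᵖ) k) • x = k • x := by
  rw [Algebra.TensorProduct.algebraMap_apply, smulBA, unop_one, mul_one, ← Algebra.smul_def]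


/-- A bimodule is *diagonal* if there is an injective bimodule homomorphism `M → A^ι`
for some index set `ι`. -/
def IsDiagonalBimodule (M : Type uM) [AddCommGroup M] [Module (A ⊗[K] Aᵐᵒᵖ) M] : Prop :=
  ∃ (ι : Type (max uA uM)) (f : M →ₗ[A ⊗[K] Aᵐᵒᵖ] (ι → A)), Function.Injective f

/-- Corollaire: for every derivation `δ : A → M` of `A` with values in a diagonal
bimodule `M` there exists a unique bimodule homomorphism `i_δ : Ω¹_Der(A) → M` such that
`δ = i_δ ∘ d`, where `d : A → Ω¹_Der(A)` is given by `(d a) δ' = δ' a`.  In other words,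
`d : A → Ω¹_Der(A)` is universal for derivations of `A` with values in diagonal
bimodules. -/
theorem omegaDer_universal_for_diagonal_bimodules
    (M : Type uM) [AddCommGroup M] [Module (A ⊗[K] Aᵐᵒᵖ) M]
    [Module K M] [IsScalarTower K (A ⊗[K] Aᵐᵒᵖ) M]
    (hM : IsDiagonalBimodule K A M)
    (δ : A →ₗ[K] M)
    (hδ : ∀ a b : A, δ (a * b)
      = (a ⊗ₜ[K] (1 : Aᵐᵒᵖ)) • δ b + ((1 : A) ⊗ₜ[K] (op b)) • δ a) :
    ∃! φ : (omegaDer K A) →ₗ[A ⊗[K] Aᵐᵒᵖ] M,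
      ∀ a : A, δ a = φ ⟨dDer K A a, Submodule.subset_span (Set.mem_range_self a)⟩ := by
  obtain ⟨ι, f, hf⟩ := hM
  have hfk : ∀ (k : K) (m : M) (i : ι), f (k • m) i = k • f m i := by
    intro k m i
    rw [← algebraMap_smul (A ⊗[K] Aᵐᵒᵖ) k m, map_smul, Pi.smul_apply, algebraMap_smulBA]
  -- the coordinate derivations `a ↦ f (δ a) i`
  have hεmem : ∀ i : ι,
      ({ toFun := fun a => f (δ a) i
         map_add' := fun a b => by
           show f (δ (a + b)) i = f (δ a) i + f (δ b) i
           rw [map_add, map_add]; rfl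
         map_smul' := fun k a => by
           show f (δ (k • a)) i = k • f (δ a) i
           rw [map_smul, hfk] } : A →ₗ[K] A) ∈ derSub K A := by
    intro i a b
    show f (δ (a * b)) i = a * f (δ b) i + f (δ a) i * b
    rw [hδ a b, map_add, Pi.add_apply, map_smul, map_smul, Pi.smul_apply, Pi.smul_apply,
      smulBA, smulBA]
    simp
  set ε : ι → derSub K A := fun i => ⟨_, hεmem i⟩ with hεdef
  -- the evaluation map `Θ : C¹(Der A, A) → A^ι`, `ω ↦ (ω (ε i))_i`
  set Θ : ((derSub K A) →ₗ[K] A) →ₗ[A ⊗[K] Aᵐᵒᵖ] (ι → A) :=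
    { toFun := fun ω i => ω (ε i)
      map_add' := fun ω₁ ω₂ => funext fun i => by
        simp only [LinearMap.add_apply, Pi.add_apply]
      map_smul' := fun t ω => funext fun i => by
        rw [RingHom.id_apply, Pi.smul_apply]
        exact eval_smul K A t ω (ε i) } with hΘdef
  have hΘd : ∀ a : A, Θ (dDer K A a) = f (δ a) := fun a => funext fun i => rfl
  have hrange : ∀ x, x ∈ Submodule.span (A ⊗[K] Aᵐᵒᵖ) (Set.range (dDer K A)) →
      Θ x ∈ LinearMap.range f := by
    intro x hx
    induction hx using Submodule.span_induction with
    | mem y hy => obtain ⟨a, rfl⟩ := hy; exact ⟨δ a, (hΘd a).symm⟩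
    | zero => rw [map_zero]; exact Submodule.zero_mem _
    | add y z hy hz hy' hz' => rw [map_add]; exact Submodule.add_mem _ hy' hz'
    | smul t y hy hy' => rw [map_smul]; exact Submodule.smul_mem _ t hy'
  let e : M ≃ₗ[A ⊗[K] Aᵐᵒᵖ] LinearMap.range f := LinearEquiv.ofInjective f hf
  let Θ' : omegaDer K A →ₗ[A ⊗[K] Aᵐᵒᵖ] LinearMap.range f :=
    LinearMap.codRestrict _ (Θ.comp (omegaDer K A).subtype) (fun x => hrange x.1 x.2)
  let φ := e.symm.toLinearMap.comp Θ'
  have hfφ : ∀ x : omegaDer K A, f (φ x) = Θ x.1 := by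
    intro x
    have h1 : f (e.symm (Θ' x)) = (e (e.symm (Θ' x)) : ι → A) :=
      (LinearEquiv.ofInjective_apply f _).symm
    rw [show φ x = e.symm (Θ' x) from rfl, h1, LinearEquiv.apply_symm_apply]
    rfl
  have hφd : ∀ a : A,
      δ a = φ ⟨dDer K A a, Submodule.subset_span (Set.mem_range_self a)⟩ := by
    intro a
    apply hf
    rw [hfφ]
    exact hΘd a
  refine ⟨φ, hφd, ?_⟩
  intro ψ hψ
  have key : ∀ (x) (hx : x ∈ Submodule.span (A ⊗[K] Aᵐᵒᵖ) (Set.range (dDer K A))),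
      ψ ⟨x, hx⟩ = φ ⟨x, hx⟩ := by
    intro x hx
    induction hx using Submodule.span_induction with
    | mem y hy =>
      obtain ⟨a, rfl⟩ := hy
      exact (hψ a).symm.trans (hφd a)
    | zero =>
      show ψ 0 = φ 0
      rw [map_zero, map_zero]
    | add y z hy hz hy' hz' =>
      show ψ (⟨y, hy⟩ + ⟨z, hz⟩) = φ (⟨y, hy⟩ + ⟨z, hz⟩)
      rw [map_add, map_add, hy', hz']
    | smul t y hy hy' =>
      show ψ (t • (⟨y, hy⟩ : omegaDer K A)) = φ (t • (⟨y, hy⟩ : omegaDer K A))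
      rw [map_smul, map_smul, hy']
  exact LinearMap.ext fun x => key x.1 x.2

end Statement
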